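/- Let F ∈ Fields_1 and let p ∈ F[t] be a monic irreducible polynomial. (i) For every a ∈ Λ^3 F(p)^× there exists b ∈ Λ^4 F(t)^× with ∂_{ν_p}^{(4)}(b) = a and ∂_{ν_q}^{(4)}(b) = 0 for every monic irreducible q ∈ F[t] with q ≠ p. (ii) For every a ∈ B_2(F(p))⊗F(p)^× there exists b ∈ B_2(F(t))⊗Λ^2 F(t)^× with ∂_{ν_p}(b) = a and ∂_{ν_q}(b) = 0 for every monic irreducible q ∈ F[t] with q ≠ p. -/

import Mathlib

open scoped TensorProduct
open ExteriorAlgebra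

noncomputable section ChowPrelim

universe u

/-- The ℚ-vector space `F^× ⊗ ℚ` attached to a field `F`. -/
abbrev UnitsQ (F : Type u) [Field F] : Type u := ℚ ⊗[ℤ] (Additive Fˣ)

/-- The canonical map `F → F^× ⊗ ℚ`, sending a nonzero `x` to `x ⊗ 1` and `0` to `0`. -/
noncomputable def mkQ {F : Type u} [Field F] (x : F) : UnitsQ F :=
  letI := Classical.dec (x = 0)
  if h : x = 0 then 0 else (1 : ℚ) ⊗ₜ[ℤ] (Additive.ofMul (Units.mk0 x h))

/-- The wedge `x₁ ∧ ⋯ ∧ xₙ ∈ Λ^n (F^× ⊗ ℚ)` of a family of elements of `F`. -/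
noncomputable def wedgeF {F : Type u} [Field F] (n : ℕ) (x : Fin n → F) :
    ⋀[ℚ]^n (UnitsQ F) :=
  ⟨ExteriorAlgebra.ιMulti ℚ n (fun i => mkQ (x i)),
    ExteriorAlgebra.ιMulti_range ℚ n ⟨_, rfl⟩⟩

/-- Wedge of an abstract family of vectors. -/
noncomputable def wedgeV {M : Type u} [AddCommGroup M] [Module ℚ M] (n : ℕ) (v : Fin n → M) :
    ⋀[ℚ]^n M :=
  ⟨ExteriorAlgebra.ιMulti ℚ n v, ExteriorAlgebra.ιMulti_range ℚ n ⟨_, rfl⟩⟩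

/-- The product `a ∧ v₁ ∧ ⋯ ∧ v_q : Λ^r M` of an element `a ∈ Λ^p M` with `q` further vectors,
where `p + q = r`. -/
noncomputable def wedgeMulC {M : Type u} [AddCommGroup M] [Module ℚ M] (p q r : ℕ)
    (h : p + q = r) (a : ⋀[ℚ]^p M) (v : Fin q → M) : ⋀[ℚ]^r M :=
  ⟨a.1 * (ExteriorAlgebra.ιMulti ℚ q v : ExteriorAlgebra ℚ M), by
    subst h
    have hmem : (ExteriorAlgebra.ιMulti ℚ q v : ExteriorAlgebra ℚ M) ∈
        (LinearMap.range (ι ℚ : M →ₗ[ℚ] ExteriorAlgebra ℚ M)) ^ q :=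
      ExteriorAlgebra.ιMulti_range ℚ q ⟨_, rfl⟩
    have h2 := Submodule.mul_mem_mul a.2 hmem
    rw [← pow_add] at h2
    exact h2⟩

/-- The functorial map `Λ^n M → Λ^n N` induced by a linear map. -/
noncomputable def powMap {M N : Type u} [AddCommGroup M] [Module ℚ M]
    [AddCommGroup N] [Module ℚ N] (n : ℕ) (f : M →ₗ[ℚ] N) :
    ⋀[ℚ]^n M →ₗ[ℚ] ⋀[ℚ]^n N :=
  (ExteriorAlgebra.map f).toLinearMap.restrict (p := ⋀[ℚ]^n M) (q := ⋀[ℚ]^n N)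
    (by
      intro x hx
      have h : Submodule.map (ExteriorAlgebra.map f).toLinearMap (⋀[ℚ]^n M) ≤ ⋀[ℚ]^n N := by
        rw [← ExteriorAlgebra.ιMulti_span_fixedDegree, ← ExteriorAlgebra.ιMulti_span_fixedDegree,
          Submodule.map_span]
        refine Submodule.span_le.2 ?_
        rintro _ ⟨_, ⟨v, rfl⟩, rfl⟩
        exact Submodule.subset_span ⟨f ∘ v, (ExteriorAlgebra.map_apply_ιMulti f v).symm⟩
      exact h ⟨x, hx, rfl⟩)

/-- The linear map `F^× ⊗ ℚ → K^× ⊗ ℚ` induced by a field embedding. -/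
noncomputable def unitsQMap {F K : Type u} [Field F] [Field K] (j : F →+* K) :
    UnitsQ F →ₗ[ℚ] UnitsQ K :=
  LinearMap.baseChange ℚ
    ((MonoidHom.toAdditive (Units.map (j : F →* K))).toIntLinearMap)

section PreBloch

variable (F : Type u) [Field F]

/-- Auxiliary "difference" of two points of `P^1(F) = Option F` (`none` is `∞`),
used to define the cross-ratio. -/
def pdiff : Option F → Option F → F
  | some a, some b => a - b
  | _, _ => 1

/-- The cross-ratio of four points of `P^1(F)`, as an element of `F`
(it lies in `F ∖ {0,1}` when the four points are distinct). -/
def crossRatio (x1 x2 x3 x4 : Option F) : F :=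
  (pdiff F x1 x3 * pdiff F x2 x4) / (pdiff F x1 x4 * pdiff F x2 x3)

/-- The subspace of relations defining the pre-Bloch group: `{0}₂, {1}₂, {∞}₂` and the
five-term cross-ratio relations for five distinct points of `P^1(F)`. -/
def B2Rel : Submodule ℚ (Option F →₀ ℚ) :=
  Submodule.span ℚ
    ({Finsupp.single (some 0) 1, Finsupp.single (some 1) 1, Finsupp.single none 1} ∪
      {r | ∃ x : Fin 5 → Option F, Function.Injective x ∧
        r = ∑ i : Fin 5, ((-1 : ℚ) ^ (i : ℕ)) •
          Finsupp.single (some (crossRatio F (x (i.succAbove 0)) (x (i.succAbove 1))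
            (x (i.succAbove 2)) (x (i.succAbove 3)))) (1 : ℚ)})

/-- The pre-Bloch group `B₂(F)` (with ℚ-coefficients). -/
abbrev B2 : Type u := (Option F →₀ ℚ) ⧸ B2Rel F

/-- The generator `{x}₂` of the pre-Bloch group. -/
def B2.gen {F : Type u} [Field F] (x : F) : B2 F :=
  Submodule.Quotient.mk (Finsupp.single (some x) 1)

end PreBloch

section Deltas

variable (F : Type u) [Field F]

/-- `d` is the differential `δ₂ : B₂(F) → Λ² F^×`, `{x}₂ ↦ x ∧ (1-x)`. -/
def IsDelta2 (d : B2 F →ₗ[ℚ] ⋀[ℚ]^2 (UnitsQ F)) : Prop :=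
  ∀ x : F, x ≠ 0 → x ≠ 1 → d (B2.gen x) = wedgeF 2 ![x, 1 - x]

/-- `d` is the differential `δ₃ : B₂(F) ⊗ F^× → Λ³ F^×`, `{x}₂ ⊗ y ↦ x ∧ (1-x) ∧ y`. -/
def IsDelta3 (d : B2 F ⊗[ℚ] UnitsQ F →ₗ[ℚ] ⋀[ℚ]^3 (UnitsQ F)) : Prop :=
  ∀ x y : F, x ≠ 0 → x ≠ 1 → y ≠ 0 →
    d (B2.gen x ⊗ₜ mkQ y) = wedgeF 3 ![x, 1 - x, y]

/-- `d` is the differential `δ₄ : B₂(F) ⊗ Λ² F^× → Λ⁴ F^×`,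
`{x}₂ ⊗ (y ∧ z) ↦ x ∧ (1-x) ∧ y ∧ z`. -/
def IsDelta4 (d : B2 F ⊗[ℚ] (⋀[ℚ]^2 (UnitsQ F)) →ₗ[ℚ] ⋀[ℚ]^4 (UnitsQ F)) : Prop :=
  ∀ x y z : F, x ≠ 0 → x ≠ 1 → y ≠ 0 → z ≠ 0 →
    d (B2.gen x ⊗ₜ wedgeF 2 ![y, z]) = wedgeF 4 ![x, 1 - x, y, z]

end Deltas

section Valuations

variable {F K : Type u} [Field F] [Field K]

/-- `ν` is (the additive form of) a discrete valuation on `F`: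
a surjection onto `ℤ` defined on `F ∖ {0}`, multiplicative, and
satisfying the ultrametric inequality. -/
structure IsDVal (ν : F → ℤ) : Prop where
  map_mul : ∀ x y : F, x ≠ 0 → y ≠ 0 → ν (x * y) = ν x + ν y
  map_add : ∀ x y : F, x ≠ 0 → y ≠ 0 → x + y ≠ 0 → min (ν x) (ν y) ≤ ν (x + y)
  surj : ∀ n : ℤ, ∃ x : F, x ≠ 0 ∧ ν x = n

/-- `res : F → K` realizes `K` as the residue field of the discrete valuation `ν`:
it is a surjective ring homomorphism on the valuation ring `O_ν` with kernel the
maximal ideal `m_ν` (and arbitrary elsewhere). -/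
structure IsResidue (ν : F → ℤ) (res : F → K) : Prop where
  map_one : res 1 = 1
  map_add : ∀ x y : F, (x = 0 ∨ 0 ≤ ν x) → (y = 0 ∨ 0 ≤ ν y) →
    res (x + y) = res x + res y
  map_mul : ∀ x y : F, (x = 0 ∨ 0 ≤ ν x) → (y = 0 ∨ 0 ≤ ν y) →
    res (x * y) = res x * res y
  zero_iff : ∀ x : F, (x = 0 ∨ 0 ≤ ν x) → (res x = 0 ↔ (x = 0 ∨ 0 < ν x))
  surj : ∀ z : K, ∃ x : F, (x = 0 ∨ 0 ≤ ν x) ∧ res x = z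

/-- `D` is the tame symbol `∂_ν^{(n+1)} : Λ^{n+1} F^× → Λ^n K^×` attached to the discrete
valuation `ν` with residue field `K` (via `res`): it is characterized by
`∂(π ∧ u₂ ∧ ⋯ ∧ u_{n+1}) = ū₂ ∧ ⋯ ∧ ū_{n+1}` for a uniformizer `π` and units `uᵢ`. -/
def IsTame (ν : F → ℤ) (res : F → K) (n : ℕ)
    (D : ⋀[ℚ]^(n + 1) (UnitsQ F) →ₗ[ℚ] ⋀[ℚ]^n (UnitsQ K)) : Prop :=
  ∀ (π : F) (u : Fin n → F), π ≠ 0 → ν π = 1 → (∀ i, u i ≠ 0 ∧ ν (u i) = 0) →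
    D (wedgeF (n + 1) (Fin.cons π u)) = wedgeF n (fun i => res (u i))

/-- `D` is the tame symbol `∂_ν^{(2)} : Λ² F^× → K^×`, with target the residue field itself. -/
def IsTame2U (ν : F → ℤ) (res : F → K) (D : ⋀[ℚ]^2 (UnitsQ F) →ₗ[ℚ] UnitsQ K) : Prop :=
  ∀ π u : F, π ≠ 0 → ν π = 1 → u ≠ 0 → ν u = 0 → D (wedgeF 2 ![π, u]) = mkQ (res u)

/-- `D` is the tame symbol `∂_ν : B₂(F) ⊗ F^× → B₂(K)`. -/
def IsTameB1 (ν : F → ℤ) (res : F → K)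
    (D : B2 F ⊗[ℚ] UnitsQ F →ₗ[ℚ] B2 K) : Prop :=
  (∀ a b : F, a ≠ 0 → a ≠ 1 → ν a ≠ 0 → b ≠ 0 → D (B2.gen a ⊗ₜ mkQ b) = 0) ∧
  (∀ u b : F, u ≠ 0 → ν u = 0 → b ≠ 0 →
    D (B2.gen u ⊗ₜ mkQ b) = -((ν b : ℚ) • B2.gen (res u)))

/-- `D` is the tame symbol `∂_ν : B₂(F) ⊗ Λ² F^× → B₂(K) ⊗ K^×`, where `D2` is the tame
symbol `∂_ν^{(2)}`. -/
def IsTameB2 (ν : F → ℤ) (res : F → K) (D2 : ⋀[ℚ]^2 (UnitsQ F) →ₗ[ℚ] UnitsQ K)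
    (D : B2 F ⊗[ℚ] (⋀[ℚ]^2 (UnitsQ F)) →ₗ[ℚ] B2 K ⊗[ℚ] UnitsQ K) : Prop :=
  (∀ (a : F) (b : ⋀[ℚ]^2 (UnitsQ F)), a ≠ 0 → a ≠ 1 → ν a ≠ 0 → D (B2.gen a ⊗ₜ b) = 0) ∧
  (∀ (u : F) (b : ⋀[ℚ]^2 (UnitsQ F)), u ≠ 0 → ν u = 0 →
    D (B2.gen u ⊗ₜ b) = -(B2.gen (res u) ⊗ₜ D2 b))

/-- `D` is the tame symbol `∂_ν : B₂(F) ⊗ Λ^{n+1} F^× → B₂(K) ⊗ Λ^n K^×`, where `Dn` is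
the tame symbol `∂_ν^{(n+1)}`. -/
def IsTameBGen (ν : F → ℤ) (res : F → K) (n : ℕ)
    (Dn : ⋀[ℚ]^(n + 1) (UnitsQ F) →ₗ[ℚ] ⋀[ℚ]^n (UnitsQ K))
    (D : B2 F ⊗[ℚ] (⋀[ℚ]^(n + 1) (UnitsQ F)) →ₗ[ℚ] B2 K ⊗[ℚ] (⋀[ℚ]^n (UnitsQ K))) : Prop :=
  (∀ (a : F) (b : ⋀[ℚ]^(n + 1) (UnitsQ F)), a ≠ 0 → a ≠ 1 → ν a ≠ 0 →
    D (B2.gen a ⊗ₜ b) = 0) ∧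
  (∀ (u : F) (b : ⋀[ℚ]^(n + 1) (UnitsQ F)), u ≠ 0 → ν u = 0 →
    D (B2.gen u ⊗ₜ b) = -(B2.gen (res u) ⊗ₜ Dn b))

end Valuations

section Fields

variable (k F : Type u) [Field k] [Field F] [Algebra k F]

/-- `F` is a finitely generated extension of `k` of transcendence degree `1`. -/
def IsFields1 : Prop :=
  (∃ s : Finset F, IntermediateField.adjoin k (s : Set F) = ⊤) ∧
  ∃ x : F, Transcendental k x ∧
    Algebra.IsAlgebraic (IntermediateField.adjoin k {x}) F

/-- `F` is a finitely generated extension of `k` of transcendence degree `2`. -/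
def IsFields2 : Prop :=
  (∃ s : Finset F, IntermediateField.adjoin k (s : Set F) = ⊤) ∧
  ∃ x y : F, AlgebraicIndependent k ![x, y] ∧
    Algebra.IsAlgebraic (IntermediateField.adjoin k {x, y}) F

/-- `res : F → k` is the canonical residue map of `ν` onto `k`
(restricting to the identity on `k`). -/
def GoodResK (ν : F → ℤ) (res : F → k) : Prop :=
  IsResidue ν res ∧ ∀ c : k, res (algebraMap k F c) = c

/-- The set `val(F)` of discrete valuations of `F` trivial on `k` with residue field `k`. -/
def ValInd : Type u :=
  {ν : F → ℤ // IsDVal ν ∧ (∀ c : k, c ≠ 0 → ν (algebraMap k F c) = 0) ∧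
    ∃ res : F → k, GoodResK k F ν res}

/-- `h : Λ³ F^× → B₂(k)` is a lifted reciprocity map on `F ∈ Fields₁`:
(1) `-δ₂(h a) = Σ_{ν ∈ val(F)} ∂_ν^{(3)} a`;
(2) `h (δ₃ c) = Σ_{ν ∈ val(F)} ∂_ν c`;
(3) `h` vanishes on the image of `Λ² F^× ⊗ k^× → Λ³ F^×`. -/
def IsLiftedRec (h : ⋀[ℚ]^3 (UnitsQ F) →ₗ[ℚ] B2 k) : Prop :=
  (∀ d2 : B2 k →ₗ[ℚ] ⋀[ℚ]^2 (UnitsQ k), IsDelta2 k d2 →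
    ∀ res : ∀ _ : ValInd k F, F → k, (∀ v : ValInd k F, GoodResK k F v.1 (res v)) →
    ∀ D : ∀ _ : ValInd k F, ⋀[ℚ]^3 (UnitsQ F) →ₗ[ℚ] ⋀[ℚ]^2 (UnitsQ k),
      (∀ v : ValInd k F, IsTame v.1 (res v) 2 (D v)) →
    ∀ a : ⋀[ℚ]^3 (UnitsQ F), -(d2 (h a)) = ∑ᶠ v : ValInd k F, D v a) ∧
  (∀ d3 : B2 F ⊗[ℚ] UnitsQ F →ₗ[ℚ] ⋀[ℚ]^3 (UnitsQ F), IsDelta3 F d3 →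
    ∀ res : ∀ _ : ValInd k F, F → k, (∀ v : ValInd k F, GoodResK k F v.1 (res v)) →
    ∀ DB : ∀ _ : ValInd k F, B2 F ⊗[ℚ] UnitsQ F →ₗ[ℚ] B2 k,
      (∀ v : ValInd k F, IsTameB1 v.1 (res v) (DB v)) →
    ∀ c : B2 F ⊗[ℚ] UnitsQ F, h (d3 c) = ∑ᶠ v : ValInd k F, DB v c) ∧
  (∀ (y z : F) (c : k), y ≠ 0 → z ≠ 0 → c ≠ 0 →
    h (wedgeF 3 ![y, z, algebraMap k F c]) = 0)

end Fields

/-- The degree `[K : j(F)]` of a field embedding. -/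
noncomputable def fieldDeg {F K : Type u} [Field F] [Field K] (j : F →+* K) : ℕ :=
  letI : Algebra F K := j.toAlgebra
  Module.finrank F K

/-- The pullback `j^* h = (1/[F₂ : j(F₁)]) · h ∘ j_*` of a lifted reciprocity map. -/
noncomputable def pullRec (k F₁ F₂ : Type u) [Field k] [Field F₁] [Field F₂]
    (j : F₁ →+* F₂) (h : ⋀[ℚ]^3 (UnitsQ F₂) →ₗ[ℚ] B2 k) :
    ⋀[ℚ]^3 (UnitsQ F₁) →ₗ[ℚ] B2 k :=
  ((fieldDeg j : ℚ))⁻¹ • (h ∘ₗ powMap 3 (unitsQMap j))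

end ChowPrelim

noncomputable section ChowPrelim2

universe u

open scoped TensorProduct

/-- The monic irreducible polynomials over `F`, indexing the closed points of `𝔸¹_F`,
i.e. the general discrete valuations of `F(t)`. -/
def MonicIrr (F : Type u) [Field F] : Type u :=
  {p : Polynomial F // p.Monic ∧ Irreducible p}

/-- The residue field `F(p) = F[t]/(p)` of the valuation attached to a monic irreducible
polynomial `p`. -/
def ResField {F : Type u} [Field F] (p : MonicIrr F) : Type u := AdjoinRoot p.1

noncomputable instance ResField.instField {F : Type u} [Field F] (p : MonicIrr F) :
    Field (ResField p) :=
  letI : Fact (Irreducible p.1) := ⟨p.2.2⟩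
  inferInstanceAs (Field (AdjoinRoot p.1))

/-- `ν` is the discrete valuation of `F(t)` attached to the monic irreducible polynomial `p`. -/
def IsNuP {F : Type u} [Field F] (p : MonicIrr F) (ν : RatFunc F → ℤ) : Prop :=
  IsDVal ν ∧ ν (algebraMap (Polynomial F) (RatFunc F) p.1) = 1 ∧
    ∀ g : Polynomial F, g ≠ 0 → ¬(p.1 ∣ g) →
      ν (algebraMap (Polynomial F) (RatFunc F) g) = 0

/-- `res` is the canonical residue map `F(t) → F(p)` of the valuation attached to `p`. -/
def IsResP {F : Type u} [Field F] (p : MonicIrr F) (ν : RatFunc F → ℤ)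
    (res : RatFunc F → ResField p) : Prop :=
  IsResidue ν res ∧ ∀ g : Polynomial F,
    res (algebraMap (Polynomial F) (RatFunc F) g) =
      (AdjoinRoot.mk p.1 g : AdjoinRoot p.1)

/-- Bundled realization of the residue field of a discrete valuation `ν` on `L`
(trivial on `k`): a field `R` with a `k`-algebra structure together with the residue map. -/
structure ResData (k L : Type u) [Field k] [Field L] [Algebra k L] (ν : L → ℤ) :
    Type (u + 1) where
  R : Type u
  [fieldR : Field R]
  [algR : Algebra k R]
  res : L → R
  isRes : IsResidue ν res
  compat : ∀ c : k, res (algebraMap k L c) = algebraMap k R c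

attribute [instance] ResData.fieldR ResData.algR

/-- The set `dval(L)` of divisorial valuations of `L ∈ Fields₂`: discrete valuations trivial
on `k` whose residue field is a finitely generated extension of `k` of transcendence
degree `1`. -/
def DValInd (k L : Type u) [Field k] [Field L] [Algebra k L] : Type u :=
  {ν : L → ℤ // IsDVal ν ∧ (∀ c : k, c ≠ 0 → ν (algebraMap k L c) = 0) ∧
    ∃ rd : ResData k L ν, IsFields1 k rd.R}

/-- A height-one prime ideal (in a domain). -/
def IsHeightOne {R : Type u} [CommRing R] (p : Ideal R) : Prop :=
  p.IsPrime ∧ p ≠ ⊥ ∧ ∀ q : Ideal R, q.IsPrime → q < p → q = ⊥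

/-- `R/p` is regular, i.e. (for a one-dimensional local ring) the maximal ideal of `R/p`
is principal. -/
def QuotRegular {R : Type u} [CommRing R] [IsLocalRing R] (p : Ideal R) : Prop :=
  ∃ t : R, Ideal.map (Ideal.Quotient.mk p) (IsLocalRing.maximalIdeal R) =
    Ideal.span {Ideal.Quotient.mk p t}

/-- The height-one primes `p` of `R` with `R/p` regular. -/
def RegPrimes (R : Type u) [CommRing R] [IsLocalRing R] : Type u :=
  {p : Ideal R // IsHeightOne p ∧ QuotRegular p}

instance RegPrimes.isPrime {R : Type u} [CommRing R] [IsLocalRing R] (p : RegPrimes R) :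
    p.1.IsPrime := p.2.1.1

/-- The residue field `κ(p) = Frac(R/p)` of a prime `p`. -/
def ResFieldP {R : Type u} [CommRing R] [IsLocalRing R] [IsDomain R] (p : RegPrimes R) :
    Type u := FractionRing (R ⧸ p.1)

noncomputable instance ResFieldP.instField {R : Type u} [CommRing R] [IsLocalRing R]
    [IsDomain R] (p : RegPrimes R) : Field (ResFieldP p) :=
  inferInstanceAs (Field (FractionRing (R ⧸ p.1)))

/-- `ν` is the discrete valuation `ν_p` of `L = Frac R` attached to a height-one prime `p`:
it is nonnegative on `R` and positive exactly on `p`. -/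
def IsNuPrime {R L : Type u} [CommRing R] [Field L] [Algebra R L] (p : Ideal R)
    (ν : L → ℤ) : Prop :=
  IsDVal ν ∧ (∀ x : R, x ≠ 0 → 0 ≤ ν (algebraMap R L x)) ∧
    ∀ x : R, x ≠ 0 → (x ∈ p ↔ 0 < ν (algebraMap R L x))

/-- `res` is the canonical residue map `L → κ(p)` of the valuation `ν_p`. -/
def IsResPrime {R L : Type u} [CommRing R] [IsLocalRing R] [IsDomain R] [Field L]
    [Algebra R L] (p : RegPrimes R) (ν : L → ℤ) (res : L → ResFieldP p) : Prop :=
  IsResidue ν res ∧ ∀ x : R,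
    res (algebraMap R L x) =
      algebraMap (R ⧸ p.1) (FractionRing (R ⧸ p.1)) (Ideal.Quotient.mk p.1 x)

/-- `ν̄` is the discrete valuation of `κ(p)` attached to the discrete valuation ring `R/p`:
nonnegative on `R/p` and positive exactly on the image of the maximal ideal of `R`. -/
def IsNuBar {R : Type u} [CommRing R] [IsLocalRing R] [IsDomain R] (p : RegPrimes R)
    (ν : ResFieldP p → ℤ) : Prop :=
  IsDVal ν ∧
  (∀ x : R ⧸ p.1, x ≠ 0 →
    0 ≤ ν (algebraMap (R ⧸ p.1) (FractionRing (R ⧸ p.1)) x)) ∧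
  ∀ x : R, Ideal.Quotient.mk p.1 x ≠ 0 →
    (x ∈ IsLocalRing.maximalIdeal R ↔
      0 < ν (algebraMap (R ⧸ p.1) (FractionRing (R ⧸ p.1)) (Ideal.Quotient.mk p.1 x)))

/-- `res` is the canonical residue map `κ(p) → k` of the valuation `ν̄_p`
(restricting to the identity on `k`). -/
def IsResBar {k R : Type u} [Field k] [CommRing R] [IsLocalRing R] [IsDomain R]
    [Algebra k R] (p : RegPrimes R) (ν : ResFieldP p → ℤ) (res : ResFieldP p → k) : Prop :=
  IsResidue ν res ∧ ∀ c : k,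
    res (algebraMap (R ⧸ p.1) (FractionRing (R ⧸ p.1))
      (Ideal.Quotient.mk p.1 (algebraMap k R c))) = c

/-- The Steinberg relations subspace of `Λ^n F^×` (with ℚ-coefficients). -/
def MilnorRel (F : Type u) [Field F] : (n : ℕ) → Submodule ℚ (⋀[ℚ]^n (UnitsQ F))
  | 0 => ⊥
  | 1 => ⊥
  | (m + 2) => Submodule.span ℚ
      {x | ∃ (a : F) (v : Fin m → F), a ≠ 0 ∧ a ≠ 1 ∧ (∀ i, v i ≠ 0) ∧
        x = wedgeF (m + 2) (Fin.cons a (Fin.cons (1 - a) v))}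

/-- The rational Milnor K-group `K_n^M(F) ⊗ ℚ`: the quotient of `Λ^n F^×` by the
Steinberg relations. -/
def MilnorQ (F : Type u) [Field F] (n : ℕ) : Type u :=
  (⋀[ℚ]^n (UnitsQ F)) ⧸ MilnorRel F n

noncomputable instance MilnorQ.instAddCommGroup (F : Type u) [Field F] (n : ℕ) :
    AddCommGroup (MilnorQ F n) :=
  inferInstanceAs (AddCommGroup ((⋀[ℚ]^n (UnitsQ F)) ⧸ MilnorRel F n))

noncomputable instance MilnorQ.instModule (F : Type u) [Field F] (n : ℕ) :
    Module ℚ (MilnorQ F n) :=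
  inferInstanceAs (Module ℚ ((⋀[ℚ]^n (UnitsQ F)) ⧸ MilnorRel F n))

/-- The class of an element of `Λ^n F^×` in `K_n^M(F) ⊗ ℚ`. -/
def MilnorQ.mk {F : Type u} [Field F] {n : ℕ} (x : ⋀[ℚ]^n (UnitsQ F)) : MilnorQ F n :=
  Submodule.Quotient.mk x

end ChowPrelim2

open scoped TensorProduct

universe u

section Helpers

variable {K L : Type u} [Field K] [Field L]

theorem mkQ_eq (x : K) (h : x ≠ 0) :
    mkQ x = (1 : ℚ) ⊗ₜ[ℤ] (Additive.ofMul (Units.mk0 x h)) := by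
  simp [mkQ, h]

theorem mkQ_one : mkQ (1 : K) = 0 := by
  rw [mkQ_eq 1 one_ne_zero]
  have : Units.mk0 (1 : K) one_ne_zero = 1 := Units.ext rfl
  rw [this, ofMul_one, TensorProduct.tmul_zero]

theorem mkQ_mul (x y : K) (hx : x ≠ 0) (hy : y ≠ 0) :
    mkQ (x * y) = mkQ x + mkQ y := by
  rw [mkQ_eq _ (mul_ne_zero hx hy), mkQ_eq x hx, mkQ_eq y hy]
  have : Units.mk0 (x * y) (mul_ne_zero hx hy) = Units.mk0 x hx * Units.mk0 y hy :=
    Units.ext rfl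
  rw [this, ofMul_mul, TensorProduct.tmul_add]

theorem span_mkQ (K : Type u) [Field K] :
    Submodule.span ℚ {v : UnitsQ K | ∃ x : K, x ≠ 0 ∧ v = mkQ x} = ⊤ := by
  rw [Submodule.eq_top_iff']
  intro a
  induction a using TensorProduct.induction_on with
  | zero => exact Submodule.zero_mem _
  | tmul q m =>
    have h1 : (q ⊗ₜ[ℤ] m : UnitsQ K) = q • ((1 : ℚ) ⊗ₜ[ℤ] m) := by
      rw [TensorProduct.smul_tmul', smul_eq_mul, mul_one]
    rw [h1]
    refine Submodule.smul_mem _ _ (Submodule.subset_span ?_)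
    refine ⟨((Additive.toMul m : Kˣ) : K), Units.ne_zero _, ?_⟩
    rw [mkQ_eq _ (Units.ne_zero _)]
    congr 2
    exact Units.ext rfl
  | add x y hx hy => exact Submodule.add_mem _ hx hy

/-- The `ιMulti` alternating map, with codomain restricted to `⋀[ℚ]^n M`. -/
noncomputable def iMS {M : Type u} [AddCommGroup M] [Module ℚ M] (n : ℕ) :
    M [⋀^Fin n]→ₗ[ℚ] (⋀[ℚ]^n M) :=
  (ExteriorAlgebra.ιMulti ℚ n).codRestrict (⋀[ℚ]^n M)
    (fun v => ExteriorAlgebra.ιMulti_range ℚ n ⟨v, rfl⟩)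

theorem wedgeV_eq_iMS {M : Type u} [AddCommGroup M] [Module ℚ M] (n : ℕ) (v : Fin n → M) :
    wedgeV n v = iMS n v := Subtype.ext rfl

theorem wedgeF_eq_iMS (n : ℕ) (x : Fin n → K) :
    wedgeF n x = iMS n (fun i => mkQ (x i)) := Subtype.ext rfl

theorem multilinear_span {M N : Type u} [AddCommGroup M] [Module ℚ M]
    [AddCommGroup N] [Module ℚ N] {n : ℕ}
    (f : MultilinearMap ℚ (fun _ : Fin n => M) N) (S : Set M)
    (hS : Submodule.span ℚ S = ⊤) (v : Fin n → M) :
    f v ∈ Submodule.span ℚ {y | ∃ w : Fin n → M, (∀ i, w i ∈ S) ∧ y = f w} := by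
  suffices h : ∀ k : ℕ, ∀ v : Fin n → M, (∀ i : Fin n, k ≤ (i : ℕ) → v i ∈ S) →
      f v ∈ Submodule.span ℚ {y | ∃ w : Fin n → M, (∀ i, w i ∈ S) ∧ y = f w} by
    exact h n v (fun i hi => absurd i.2 (by omega))
  intro k
  induction k with
  | zero =>
    intro v hv
    exact Submodule.subset_span ⟨v, fun i => hv i (Nat.zero_le _), rfl⟩
  | succ k ih =>
    intro v hv
    by_cases hk : k < n
    · set j : Fin n := ⟨k, hk⟩ with hj
      have hTop : Submodule.span ℚ S ≤
          (Submodule.span ℚ {y | ∃ w : Fin n → M, (∀ i, w i ∈ S) ∧ y = f w}).comap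
            (f.toLinearMap v j) := by
        rw [Submodule.span_le]
        intro s hs
        simp only [Submodule.mem_comap, SetLike.mem_coe]
        show f (Function.update v j s) ∈ _
        apply ih
        intro i hi
        rcases eq_or_ne i j with rfl | hij
        · rw [Function.update_self]; exact hs
        · rw [Function.update_of_ne hij]
          refine hv i ?_
          have : (i : ℕ) ≠ k := fun h => hij (Fin.ext (by simp [hj, h]))
          omega
      have hm : v j ∈ Submodule.span ℚ S := hS ▸ Submodule.mem_top
      have := hTop hm
      simp only [Submodule.mem_comap] at this
      have heq : f.toLinearMap v j (v j) = f v := by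
        show f (Function.update v j (v j)) = f v
        rw [Function.update_eq_self]
      rwa [heq] at this
    · exact ih v (fun i hi => hv i (by omega))

theorem span_wedgeF (K : Type u) [Field K] (n : ℕ) :
    Submodule.span ℚ {y : ⋀[ℚ]^n (UnitsQ K) |
      ∃ u : Fin n → K, (∀ i, u i ≠ 0) ∧ y = wedgeF n u} = ⊤ := by
  have hspan : Submodule.span ℚ
      (Set.range (fun v : Fin n → UnitsQ K => wedgeV n v)) = ⊤ := by
    apply Submodule.map_injective_of_injective
      (Submodule.injective_subtype (⋀[ℚ]^n (UnitsQ K)))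
    rw [Submodule.map_span, Submodule.map_top, Submodule.range_subtype]
    have himg : ((⋀[ℚ]^n (UnitsQ K)).subtype '' Set.range (fun v : Fin n → UnitsQ K => wedgeV n v))
        = Set.range (ExteriorAlgebra.ιMulti ℚ n) := by
      ext x
      constructor
      · rintro ⟨_, ⟨v, rfl⟩, rfl⟩; exact ⟨v, rfl⟩
      · rintro ⟨v, rfl⟩; exact ⟨wedgeV n v, ⟨v, rfl⟩, rfl⟩
    rw [himg]
    exact ExteriorAlgebra.ιMulti_span_fixedDegree ℚ n
  rw [eq_top_iff, ← hspan, Submodule.span_le]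
  rintro _ ⟨v, rfl⟩
  show wedgeV n v ∈ _
  have h2 := multilinear_span (iMS (M := UnitsQ K) n).toMultilinearMap
    {x : UnitsQ K | ∃ c : K, c ≠ 0 ∧ x = mkQ c} (span_mkQ K) v
  rw [wedgeV_eq_iMS]
  refine Submodule.span_le.2 ?_ h2
  rintro _ ⟨w, hw, rfl⟩
  choose c hc0 hc1 using hw
  refine Submodule.subset_span ⟨c, hc0, ?_⟩
  have hwc : w = fun i => mkQ (c i) := funext hc1
  rw [wedgeF_eq_iMS, ← hwc]
  rfl

end Helpers
section Helpers2

variable {K L : Type u} [Field K] [Field L]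

theorem mkQ_comp_cons {n : ℕ} (a : K) (w : Fin n → K) :
    (fun i => mkQ ((Fin.cons a w : Fin (n + 1) → K) i)) =
      Fin.cons (α := fun _ : Fin (n + 1) => UnitsQ K) (mkQ a) (fun i => mkQ (w i)) := by
  funext i
  induction i using Fin.cases with
  | zero => simp
  | succ j => simp

theorem wedgeF_cons_add {n : ℕ} (X Y : UnitsQ K) (v : Fin n → UnitsQ K) :
    iMS (n + 1) (Fin.cons (X + Y) v) =
      iMS (n + 1) (Fin.cons X v) + iMS (n + 1) (Fin.cons Y v) := by
  have h := (iMS (M := UnitsQ K) (n + 1)).map_update_add (Fin.cons X v) 0 X Y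
  rw [Fin.update_cons_zero, Fin.update_cons_zero, Fin.update_cons_zero] at h
  exact h

theorem wedgeF_cons_mul {n : ℕ} (a b : K) (ha : a ≠ 0) (hb : b ≠ 0) (w : Fin n → K) :
    wedgeF (n + 1) (Fin.cons (a * b) w) =
      wedgeF (n + 1) (Fin.cons a w) + wedgeF (n + 1) (Fin.cons b w) := by
  rw [wedgeF_eq_iMS, wedgeF_eq_iMS, wedgeF_eq_iMS, mkQ_comp_cons, mkQ_comp_cons, mkQ_comp_cons,
    mkQ_mul a b ha hb, wedgeF_cons_add]

theorem tame_units {n : ℕ} (ν : K → ℤ) (hν : IsDVal ν) (res : K → L)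
    (D : ⋀[ℚ]^(n + 1) (UnitsQ K) →ₗ[ℚ] ⋀[ℚ]^n (UnitsQ L)) (hD : IsTame ν res n D)
    (π : K) (hπ0 : π ≠ 0) (hπ : ν π = 1) (u : Fin (n + 1) → K)
    (hu : ∀ i, u i ≠ 0 ∧ ν (u i) = 0) :
    D (wedgeF (n + 1) u) = 0 := by
  have hcons : Fin.cons (u 0) (Fin.tail u) = u := Fin.cons_self_tail u
  have hw : ∀ i, Fin.tail u i ≠ 0 ∧ ν (Fin.tail u i) = 0 := fun i => hu i.succ
  have key := wedgeF_cons_mul π (u 0) hπ0 (hu 0).1 (Fin.tail u)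
  have e1 := hD (π * u 0) (Fin.tail u) (mul_ne_zero hπ0 (hu 0).1)
    (by rw [hν.map_mul _ _ hπ0 (hu 0).1, hπ, (hu 0).2]; ring) hw
  have e2 := hD π (Fin.tail u) hπ0 hπ hw
  have h3 := congrArg D key
  rw [map_add, e1, e2, hcons] at h3
  have h5 := sub_eq_zero.mpr h3.symm
  rwa [add_sub_cancel_left] at h5

theorem tame2_units (ν : K → ℤ) (hν : IsDVal ν) (res : K → L)
    (D : ⋀[ℚ]^2 (UnitsQ K) →ₗ[ℚ] UnitsQ L) (hD : IsTame2U ν res D)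
    (π : K) (hπ0 : π ≠ 0) (hπ : ν π = 1) (u₁ u₂ : K)
    (h1 : u₁ ≠ 0) (hv1 : ν u₁ = 0) (h2 : u₂ ≠ 0) (hv2 : ν u₂ = 0) :
    D (wedgeF 2 ![u₁, u₂]) = 0 := by
  have key : wedgeF 2 (Fin.cons (π * u₁) ![u₂]) =
      wedgeF 2 (Fin.cons π ![u₂]) + wedgeF 2 (Fin.cons u₁ ![u₂]) :=
    wedgeF_cons_mul π u₁ hπ0 h1 ![u₂]
  have e1 := hD (π * u₁) u₂ (mul_ne_zero hπ0 h1)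
    (by rw [hν.map_mul _ _ hπ0 h1, hπ, hv1]; ring) h2 hv2
  have e2 := hD π u₂ hπ0 hπ h2 hv2
  have h3 := congrArg D key
  have hm1 : (Fin.cons (π * u₁) ![u₂] : Fin 2 → K) = ![π * u₁, u₂] := rfl
  have hm2 : (Fin.cons π ![u₂] : Fin 2 → K) = ![π, u₂] := rfl
  have hm3 : (Fin.cons u₁ ![u₂] : Fin 2 → K) = ![u₁, u₂] := rfl
  rw [map_add, hm1, hm2, hm3, e1, e2] at h3
  have h5 := sub_eq_zero.mpr h3.symm
  rwa [add_sub_cancel_left] at h5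

theorem B2_span (K : Type u) [Field K] :
    Submodule.span ℚ {y : B2 K | ∃ x : K, x ≠ 0 ∧ x ≠ 1 ∧ y = B2.gen x} = ⊤ := by
  have h1 : (⊤ : Submodule ℚ (B2 K)) = Submodule.map (B2Rel K).mkQ ⊤ := by
    rw [Submodule.map_top, Submodule.range_mkQ]
  rw [eq_top_iff, h1, ← Finsupp.supported_univ, Finsupp.supported_eq_span_single,
    Submodule.map_span, Submodule.span_le]
  rintro _ ⟨_, ⟨o, -, rfl⟩, rfl⟩
  show (B2Rel K).mkQ (Finsupp.single o 1) ∈ _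
  have hzero : ∀ o' : Option K, Finsupp.single o' (1 : ℚ) ∈ B2Rel K →
      (B2Rel K).mkQ (Finsupp.single o' 1) ∈
        Submodule.span ℚ {y : B2 K | ∃ x : K, x ≠ 0 ∧ x ≠ 1 ∧ y = B2.gen x} := by
    intro o' ho'
    have : (B2Rel K).mkQ (Finsupp.single o' 1) = 0 := (Submodule.Quotient.mk_eq_zero _).2 ho'
    rw [this]; exact Submodule.zero_mem _
  match o with
  | none =>
    exact hzero none (Submodule.subset_span (Or.inl (by simp)))
  | some x =>
    by_cases hx0 : x = 0
    · subst hx0; exact hzero _ (Submodule.subset_span (Or.inl (by simp)))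
    · by_cases hx1 : x = 1
      · subst hx1; exact hzero _ (Submodule.subset_span (Or.inl (by simp)))
      · exact Submodule.subset_span ⟨x, hx0, hx1, rfl⟩

theorem tensor_span {M N : Type u} [AddCommGroup M] [Module ℚ M] [AddCommGroup N] [Module ℚ N]
    (S : Set M) (T : Set N) (hS : Submodule.span ℚ S = ⊤) (hT : Submodule.span ℚ T = ⊤) :
    Submodule.span ℚ {y : M ⊗[ℚ] N | ∃ m ∈ S, ∃ n ∈ T, y = m ⊗ₜ[ℚ] n} = ⊤ := by
  rw [eq_top_iff, ← TensorProduct.span_tmul_eq_top ℚ M N, Submodule.span_le]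
  rintro _ ⟨m, n, rfl⟩
  have inner : ∀ s ∈ S, ∀ x : N, s ⊗ₜ[ℚ] x ∈
      Submodule.span ℚ {y : M ⊗[ℚ] N | ∃ m ∈ S, ∃ n ∈ T, y = m ⊗ₜ[ℚ] n} := by
    intro s hs x
    have hle : Submodule.span ℚ T ≤
        (Submodule.span ℚ {y : M ⊗[ℚ] N | ∃ m ∈ S, ∃ n ∈ T, y = m ⊗ₜ[ℚ] n}).comap
          (TensorProduct.mk ℚ M N s) := by
      rw [Submodule.span_le]
      intro t ht
      exact Submodule.subset_span ⟨s, hs, t, ht, rfl⟩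
    exact hle (hT ▸ Submodule.mem_top)
  have houter : Submodule.span ℚ S ≤
      (Submodule.span ℚ {y : M ⊗[ℚ] N | ∃ m ∈ S, ∃ n ∈ T, y = m ⊗ₜ[ℚ] n}).comap
        ((TensorProduct.mk ℚ M N).flip n) := by
    rw [Submodule.span_le]
    intro s hs
    exact inner s hs n
  exact houter (hS ▸ Submodule.mem_top)

end Helpers2
section Helpers3

variable {F : Type u} [Field F]

theorem MonicIrr.natDegree_pos (q : MonicIrr F) : 0 < q.1.natDegree := by
  rcases Nat.eq_zero_or_pos q.1.natDegree with h | h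
  · exfalso
    have hdeg : q.1.degree = 0 := by
      rw [Polynomial.degree_eq_natDegree q.2.1.ne_zero, h]; rfl
    exact q.2.2.not_isUnit (Polynomial.isUnit_iff_degree_eq_zero.2 hdeg)
  · exact h

theorem MonicIrr.not_dvd {q r : MonicIrr F} (h : q ≠ r) : ¬ q.1 ∣ r.1 := fun hd =>
  h (Subtype.ext (Polynomial.eq_of_monic_of_associated q.2.1 r.2.1
    (q.2.2.associated_of_dvd r.2.2 hd)))

theorem algP_ne_zero {g : Polynomial F} (hg : g ≠ 0) :
    algebraMap (Polynomial F) (RatFunc F) g ≠ 0 := RatFunc.algebraMap_ne_zero hg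

theorem nuP_alg_eq_zero (q : MonicIrr F) {ν : RatFunc F → ℤ} (hν : IsNuP q ν)
    {g : Polynomial F} (hg : g ≠ 0) (hnd : ¬ q.1 ∣ g) :
    ν (algebraMap (Polynomial F) (RatFunc F) g) = 0 := hν.2.2 g hg hnd

theorem finite_dvd_monicIrr {g : Polynomial F} (hg : g ≠ 0) :
    {q : MonicIrr F | q.1 ∣ g}.Finite := by
  rw [← Set.finite_coe_iff]
  have : Finite {r : Polynomial F // r.Monic ∧ r ∣ g} :=
    @Finite.of_fintype _ (Polynomial.fintypeSubtypeMonicDvd g hg)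
  exact Finite.of_injective
    (fun q => (⟨q.1.1, q.1.2.1, q.2⟩ : {r : Polynomial F // r.Monic ∧ r ∣ g}))
    (fun q r h => by
      exact Subtype.ext (Subtype.ext (Subtype.mk_eq_mk.1 h)))

theorem exists_poly_rep (p : MonicIrr F) (x : ResField p) (hx : x ≠ 0) :
    ∃ g : Polynomial F, g ≠ 0 ∧ g.natDegree < p.1.natDegree ∧ ¬ p.1 ∣ g ∧
      (AdjoinRoot.mk p.1 g : AdjoinRoot p.1) = x := by
  obtain ⟨f, hf⟩ := AdjoinRoot.mk_surjective (g := p.1) x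
  have hmk : (AdjoinRoot.mk p.1 (f %ₘ p.1) : AdjoinRoot p.1) = x := by
    rw [Polynomial.modByMonic_eq_sub_mul_div f p.1, map_sub, map_mul, AdjoinRoot.mk_self,
      zero_mul, sub_zero, hf]
  have hg0 : f %ₘ p.1 ≠ 0 := by
    intro h; rw [h, map_zero] at hmk; exact hx hmk.symm
  have hdeg : (f %ₘ p.1).natDegree < p.1.natDegree :=
    Polynomial.natDegree_lt_natDegree hg0 (Polynomial.degree_modByMonic_lt f p.2.1)
  refine ⟨f %ₘ p.1, hg0, hdeg, ?_, hmk⟩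
  intro hd
  have := Polynomial.natDegree_le_of_dvd hd hg0
  omega

end Helpers3
open scoped TensorProduct

set_option maxHeartbeats 2000000 in
set_option synthInstance.maxHeartbeats 400000 in
/-- existence of lifts for the tame symbols at a monic irreducible `p`,
both on `Λ³ F(p)^×` (lift in `Λ⁴ F(t)^×`) and on `B₂(F(p)) ⊗ F(p)^×`
(lift in `B₂(F(t)) ⊗ Λ² F(t)^×`). -/
theorem statement_7 (k F : Type u) [Field k] [IsAlgClosed k] [CharZero k] [Field F]
    [Algebra k F] (hF : IsFields1 k F) (p : MonicIrr F)
    (ν : ∀ q : MonicIrr F, RatFunc F → ℤ) (hν : ∀ q, IsNuP q (ν q))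
    (res : ∀ q : MonicIrr F, RatFunc F → ResField q) (hres : ∀ q, IsResP q (ν q) (res q))
    (D4 : ∀ q : MonicIrr F,
      ⋀[ℚ]^4 (UnitsQ (RatFunc F)) →ₗ[ℚ] ⋀[ℚ]^3 (UnitsQ (ResField q)))
    (hD4 : ∀ q, IsTame (ν q) (res q) 3 (D4 q))
    (D2 : ∀ q : MonicIrr F, ⋀[ℚ]^2 (UnitsQ (RatFunc F)) →ₗ[ℚ] UnitsQ (ResField q))
    (hD2 : ∀ q, IsTame2U (ν q) (res q) (D2 q))
    (DB : ∀ q : MonicIrr F,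
      B2 (RatFunc F) ⊗[ℚ] (⋀[ℚ]^2 (UnitsQ (RatFunc F))) →ₗ[ℚ]
        B2 (ResField q) ⊗[ℚ] UnitsQ (ResField q))
    (hDB : ∀ q, IsTameB2 (ν q) (res q) (D2 q) (DB q)) :
    (∀ a : ⋀[ℚ]^3 (UnitsQ (ResField p)),
      ∃ b : ⋀[ℚ]^4 (UnitsQ (RatFunc F)),
        D4 p b = a ∧ ∀ q : MonicIrr F, q ≠ p → D4 q b = 0) ∧
    (∀ a : B2 (ResField p) ⊗[ℚ] UnitsQ (ResField p),
      ∃ b : B2 (RatFunc F) ⊗[ℚ] (⋀[ℚ]^2 (UnitsQ (RatFunc F))),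
        DB p b = a ∧ ∀ q : MonicIrr F, q ≠ p → DB q b = 0) := by
  classical
  have hPne : ∀ q : MonicIrr F, algebraMap (Polynomial F) (RatFunc F) q.1 ≠ 0 :=
    fun q => algP_ne_zero q.2.1.ne_zero
  have hPval : ∀ q : MonicIrr F, ν q (algebraMap (Polynomial F) (RatFunc F) q.1) = 1 :=
    fun q => (hν q).2.1
  -- Part (i)
  have key4 : ∀ N : ℕ, ∀ p : MonicIrr F, p.1.natDegree ≤ N →
      ∀ a : ⋀[ℚ]^3 (UnitsQ (ResField p)),
        ∃ b : ⋀[ℚ]^4 (UnitsQ (RatFunc F)),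
          D4 p b = a ∧ ∀ q : MonicIrr F, q ≠ p → D4 q b = 0 := by
    intro N
    induction N with
    | zero =>
      intro p hp
      exact absurd hp (by have := MonicIrr.natDegree_pos p; omega)
    | succ N ih =>
      intro p hdeg a
      suffices hsur : Submodule.map (D4 p)
          (⨅ q : MonicIrr F, ⨅ _ : q ≠ p, LinearMap.ker (D4 q)) = ⊤ by
        have ha : a ∈ Submodule.map (D4 p)
            (⨅ q : MonicIrr F, ⨅ _ : q ≠ p, LinearMap.ker (D4 q)) :=
          hsur ▸ Submodule.mem_top
        obtain ⟨b, hbK, hba⟩ := Submodule.mem_map.1 ha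
        exact ⟨b, hba, fun q hq =>
          LinearMap.mem_ker.1 ((Submodule.mem_iInf _).1 ((Submodule.mem_iInf _).1 hbK q) hq)⟩
      rw [eq_top_iff, ← span_wedgeF (ResField p) 3, Submodule.span_le]
      rintro _ ⟨u, hu, rfl⟩
      have hgex : ∀ i : Fin 3, ∃ g : Polynomial F, g ≠ 0 ∧ g.natDegree < p.1.natDegree ∧
          ¬ p.1 ∣ g ∧ (AdjoinRoot.mk p.1 g : AdjoinRoot p.1) = u i :=
        fun i => exists_poly_rep p (u i) (hu i)
      choose g hg0 hgdeg hgnd hgu using hgex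
      have hb₀p : D4 p (wedgeF (3 + 1) (Fin.cons (algebraMap (Polynomial F) (RatFunc F) p.1)
          (fun i => algebraMap (Polynomial F) (RatFunc F) (g i)))) = wedgeF 3 u := by
        rw [hD4 p _ _ (hPne p) (hPval p)
          (fun i => ⟨algP_ne_zero (hg0 i), nuP_alg_eq_zero p (hν p) (hg0 i) (hgnd i)⟩)]
        have hru : (fun i : Fin 3 =>
            res p (algebraMap (Polynomial F) (RatFunc F) (g i))) = u := by
          funext i
          rw [(hres p).2 (g i)]
          exact hgu i
        rw [hru]
      have hTfin : {q : MonicIrr F | ∃ i : Fin 3, q.1 ∣ g i}.Finite := by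
        have hsub : {q : MonicIrr F | ∃ i : Fin 3, q.1 ∣ g i} ⊆
            ⋃ i : Fin 3, {q : MonicIrr F | q.1 ∣ g i} := by
          rintro q ⟨i, hqi⟩
          exact Set.mem_iUnion.2 ⟨i, hqi⟩
        exact (Set.finite_iUnion (fun i => finite_dvd_monicIrr (hg0 i))).subset hsub
      have hTdeg : ∀ q ∈ hTfin.toFinset, q.1.natDegree ≤ N := by
        intro q hq
        obtain ⟨i, hd⟩ := hTfin.mem_toFinset.1 hq
        have h1 := Polynomial.natDegree_le_of_dvd hd (hg0 i)
        have h2 := hgdeg i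
        omega
      have hpT : p ∉ hTfin.toFinset := by
        intro hp
        obtain ⟨i, hd⟩ := hTfin.mem_toFinset.1 hp
        have h1 := Polynomial.natDegree_le_of_dvd hd (hg0 i)
        have h2 := hgdeg i
        omega
      have hc : ∀ q : MonicIrr F, ∃ cq : ⋀[ℚ]^4 (UnitsQ (RatFunc F)),
          (q ∈ hTfin.toFinset → D4 q cq = D4 q (wedgeF (3 + 1)
            (Fin.cons (algebraMap (Polynomial F) (RatFunc F) p.1)
              (fun i => algebraMap (Polynomial F) (RatFunc F) (g i))))) ∧
          ∀ r : MonicIrr F, r ≠ q → D4 r cq = 0 := by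
        intro q
        by_cases hq : q ∈ hTfin.toFinset
        · obtain ⟨cq, h1, h2⟩ := ih q (hTdeg q hq) _
          exact ⟨cq, fun _ => h1, h2⟩
        · exact ⟨0, fun h => absurd h hq, fun r _ => map_zero _⟩
      choose c hc1 hc2 using hc
      show _ ∈ Submodule.map (D4 p) _
      refine ⟨wedgeF (3 + 1) (Fin.cons (algebraMap (Polynomial F) (RatFunc F) p.1)
        (fun i => algebraMap (Polynomial F) (RatFunc F) (g i))) - ∑ q ∈ hTfin.toFinset, c q,
        ?_, ?_⟩
      · simp only [SetLike.mem_coe]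
        rw [Submodule.mem_iInf]
        intro q
        rw [Submodule.mem_iInf]
        intro hq
        rw [LinearMap.mem_ker, map_sub, map_sum]
        by_cases hqT : q ∈ hTfin.toFinset
        · rw [Finset.sum_eq_single_of_mem q hqT (fun r hr hrq => hc2 r q (Ne.symm hrq)),
            hc1 q hqT, sub_self]
        · rw [Finset.sum_eq_zero (fun r hr => hc2 r q (fun h => hqT (h ▸ hr))), sub_zero]
          apply tame_units (ν q) (hν q).1 (res q) (D4 q) (hD4 q)
            (algebraMap (Polynomial F) (RatFunc F) q.1) (hPne q) (hPval q)
          intro i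
          refine Fin.cases ?_ (fun j => ?_) i
          · simp only [Fin.cons_zero]
            exact ⟨hPne p, nuP_alg_eq_zero q (hν q) p.2.1.ne_zero (MonicIrr.not_dvd hq)⟩
          · simp only [Fin.cons_succ]
            exact ⟨algP_ne_zero (hg0 j), nuP_alg_eq_zero q (hν q) (hg0 j)
              (fun hd => hqT (hTfin.mem_toFinset.2 ⟨j, hd⟩))⟩
      · rw [map_sub, map_sum, hb₀p,
          Finset.sum_eq_zero (fun r hr => hc2 r p (fun h => hpT (h ▸ hr))), sub_zero]
  -- Part (ii)
  have keyB : ∀ N : ℕ, ∀ p : MonicIrr F, p.1.natDegree ≤ N →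
      ∀ a : B2 (ResField p) ⊗[ℚ] UnitsQ (ResField p),
        ∃ b : B2 (RatFunc F) ⊗[ℚ] (⋀[ℚ]^2 (UnitsQ (RatFunc F))),
          DB p b = a ∧ ∀ q : MonicIrr F, q ≠ p → DB q b = 0 := by
    intro N
    induction N with
    | zero =>
      intro p hp
      exact absurd hp (by have := MonicIrr.natDegree_pos p; omega)
    | succ N ih =>
      intro p hdeg a
      suffices hsur : Submodule.map (DB p)
          (⨅ q : MonicIrr F, ⨅ _ : q ≠ p, LinearMap.ker (DB q)) = ⊤ by
        have ha : a ∈ Submodule.map (DB p)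
            (⨅ q : MonicIrr F, ⨅ _ : q ≠ p, LinearMap.ker (DB q)) :=
          hsur ▸ Submodule.mem_top
        obtain ⟨b, hbK, hba⟩ := Submodule.mem_map.1 ha
        exact ⟨b, hba, fun q hq =>
          LinearMap.mem_ker.1 ((Submodule.mem_iInf _).1 ((Submodule.mem_iInf _).1 hbK q) hq)⟩
      rw [eq_top_iff, ← tensor_span {y : B2 (ResField p) | ∃ x : ResField p,
          x ≠ 0 ∧ x ≠ 1 ∧ y = B2.gen x}
          {v : UnitsQ (ResField p) | ∃ y : ResField p, y ≠ 0 ∧ v = mkQ y}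
          (B2_span (ResField p)) (span_mkQ (ResField p)), Submodule.span_le]
      rintro _ ⟨m, ⟨x, hx0, hx1, rfl⟩, nn, ⟨y, hy0, rfl⟩, rfl⟩
      obtain ⟨g, hg0, hgdeg, hgnd, hgx⟩ := exists_poly_rep p x hx0
      obtain ⟨h, hh0, hhdeg, hhnd, hhy⟩ := exists_poly_rep p y hy0
      have hb₀p : DB p (-(B2.gen (algebraMap (Polynomial F) (RatFunc F) g) ⊗ₜ[ℚ]
          wedgeF 2 ![algebraMap (Polynomial F) (RatFunc F) p.1,
            algebraMap (Polynomial F) (RatFunc F) h])) = B2.gen x ⊗ₜ[ℚ] mkQ y := by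
        rw [map_neg (DB p), (hDB p).2 _ _ (algP_ne_zero hg0) (nuP_alg_eq_zero p (hν p) hg0 hgnd),
          neg_neg, hD2 p _ _ (hPne p) (hPval p) (algP_ne_zero hh0)
            (nuP_alg_eq_zero p (hν p) hh0 hhnd), (hres p).2 g, (hres p).2 h, hgx, hhy]
      have hTfin : {q : MonicIrr F | q.1 ∣ g ∨ q.1 ∣ h}.Finite := by
        have : {q : MonicIrr F | q.1 ∣ g ∨ q.1 ∣ h} =
            {q : MonicIrr F | q.1 ∣ g} ∪ {q : MonicIrr F | q.1 ∣ h} := rfl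
        rw [this]
        exact (finite_dvd_monicIrr hg0).union (finite_dvd_monicIrr hh0)
      have hTdeg : ∀ q ∈ hTfin.toFinset, q.1.natDegree ≤ N := by
        intro q hq
        rcases hTfin.mem_toFinset.1 hq with hd | hd
        · have h1 := Polynomial.natDegree_le_of_dvd hd hg0
          omega
        · have h1 := Polynomial.natDegree_le_of_dvd hd hh0
          omega
      have hpT : p ∉ hTfin.toFinset := by
        intro hp
        rcases hTfin.mem_toFinset.1 hp with hd | hd
        · have h1 := Polynomial.natDegree_le_of_dvd hd hg0
          omega
        · have h1 := Polynomial.natDegree_le_of_dvd hd hh0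
          omega
      have hc : ∀ q : MonicIrr F, ∃ cq : B2 (RatFunc F) ⊗[ℚ] (⋀[ℚ]^2 (UnitsQ (RatFunc F))),
          (q ∈ hTfin.toFinset → DB q cq =
            DB q (-(B2.gen (algebraMap (Polynomial F) (RatFunc F) g) ⊗ₜ[ℚ]
              wedgeF 2 ![algebraMap (Polynomial F) (RatFunc F) p.1,
                algebraMap (Polynomial F) (RatFunc F) h]))) ∧
          ∀ r : MonicIrr F, r ≠ q → DB r cq = 0 := by
        intro q
        by_cases hq : q ∈ hTfin.toFinset
        · obtain ⟨cq, h1, h2⟩ := ih q (hTdeg q hq) _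
          exact ⟨cq, fun _ => h1, h2⟩
        · exact ⟨0, fun hmem => absurd hmem hq, fun r _ => map_zero _⟩
      choose c hc1 hc2 using hc
      have hvanish : ∀ q : MonicIrr F, q ≠ p → q ∉ hTfin.toFinset →
          DB q (-(B2.gen (algebraMap (Polynomial F) (RatFunc F) g) ⊗ₜ[ℚ]
            wedgeF 2 ![algebraMap (Polynomial F) (RatFunc F) p.1,
              algebraMap (Polynomial F) (RatFunc F) h])) = 0 := by
        intro q hq hqT
        have hndg : ¬ q.1 ∣ g := fun hd => hqT (hTfin.mem_toFinset.2 (Or.inl hd))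
        have hndh : ¬ q.1 ∣ h := fun hd => hqT (hTfin.mem_toFinset.2 (Or.inr hd))
        rw [map_neg (DB q), (hDB q).2 _ _ (algP_ne_zero hg0) (nuP_alg_eq_zero q (hν q) hg0 hndg),
          neg_neg,
          tame2_units (ν q) (hν q).1 (res q) (D2 q) (hD2 q)
            (algebraMap (Polynomial F) (RatFunc F) q.1) (hPne q) (hPval q) _ _
            (hPne p) (nuP_alg_eq_zero q (hν q) p.2.1.ne_zero (MonicIrr.not_dvd hq))
            (algP_ne_zero hh0) (nuP_alg_eq_zero q (hν q) hh0 hndh),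
          TensorProduct.tmul_zero]
      show _ ∈ Submodule.map (DB p) _
      refine ⟨-(B2.gen (algebraMap (Polynomial F) (RatFunc F) g) ⊗ₜ[ℚ]
        wedgeF 2 ![algebraMap (Polynomial F) (RatFunc F) p.1,
          algebraMap (Polynomial F) (RatFunc F) h]) - ∑ q ∈ hTfin.toFinset, c q, ?_, ?_⟩
      · simp only [SetLike.mem_coe]
        rw [Submodule.mem_iInf]
        intro q
        rw [Submodule.mem_iInf]
        intro hq
        rw [LinearMap.mem_ker, map_sub, map_sum]
        by_cases hqT : q ∈ hTfin.toFinset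
        · rw [Finset.sum_eq_single_of_mem q hqT (fun r hr hrq => hc2 r q (Ne.symm hrq)),
            hc1 q hqT, sub_self]
        · rw [Finset.sum_eq_zero (fun r hr => hc2 r q (fun heq => hqT (heq ▸ hr))), sub_zero]
          exact hvanish q hq hqT
      · rw [map_sub, map_sum, hb₀p,
          Finset.sum_eq_zero (fun r hr => hc2 r p (fun heq => hpT (heq ▸ hr))), sub_zero]
  exact ⟨fun a => key4 p.1.natDegree p le_rfl a, fun a => keyB p.1.natDegree p le_rfl a⟩
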